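/- arXiv:0912.5396 — 3 statements merged into one kernel-verified Lean document; each statement's English description precedes it below -/
import Mathlib

section
/- Let X be a separable complex Banach space and D the closed unit disc. The set Δ = {(T, λ) ∈ L(X) × D : λ ∈ σ(T)} (where σ(T) = {λ ∈ D : T − λI not invertible}) is a Borel subset of L(X) × D, where L(X) carries the Borel structure of the strong operator topology. -/
open Metric

/-- The strong operator topology on `L(X)`. -/
def SOT (𝕜 X : Type*) [NontriviallyNormedField 𝕜] [NormedAddCommGroup X]
    [NormedSpace 𝕜 X] : TopologicalSpace (X →L[𝕜] X) :=
  TopologicalSpace.induced (fun T => (T : X → X)) Pi.topologicalSpace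

/-- The product of the strong operator topology on `L(X)` and the subspace
topology on the closed unit disc `D`. -/
noncomputable def SOTprodD (X : Type*) [NormedAddCommGroup X] [NormedSpace ℂ X] :
    TopologicalSpace ((X →L[ℂ] X) × (closedBall (0 : ℂ) 1)) :=
  @instTopologicalSpaceProd _ _ (SOT ℂ X) _

section Aux

variable {X : Type*} [NormedAddCommGroup X] [NormedSpace ℂ X]

/-- A continuous linear map on a Banach space is a unit iff it is bounded below
and has dense range. -/
private lemma isUnit_iff_CLM [CompleteSpace X] (S : X →L[ℂ] X) :
    IsUnit S ↔ (∃ c > 0, ∀ x, c * ‖x‖ ≤ ‖S x‖) ∧ DenseRange S := by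
  constructor
  · rintro ⟨u, rfl⟩
    have hinv : ∀ x, (↑u⁻¹ : X →L[ℂ] X) ((↑u : X →L[ℂ] X) x) = x := fun x => by
      rw [← ContinuousLinearMap.mul_apply, u.inv_mul, ContinuousLinearMap.one_apply]
    refine ⟨⟨(‖(↑u⁻¹ : X →L[ℂ] X)‖ + 1)⁻¹, by positivity, fun x => ?_⟩, ?_⟩
    · rw [inv_mul_le_iff₀ (by positivity)]
      calc ‖x‖ = ‖(↑u⁻¹ : X →L[ℂ] X) ((↑u : X →L[ℂ] X) x)‖ := by rw [hinv]
        _ ≤ ‖(↑u⁻¹ : X →L[ℂ] X)‖ * ‖(↑u : X →L[ℂ] X) x‖ :=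
            ContinuousLinearMap.le_opNorm _ _
        _ ≤ (‖(↑u⁻¹ : X →L[ℂ] X)‖ + 1) * ‖(↑u : X →L[ℂ] X) x‖ := by
            have := norm_nonneg ((↑u : X →L[ℂ] X) x); nlinarith
    · refine Function.Surjective.denseRange fun y => ⟨(↑u⁻¹ : X →L[ℂ] X) y, ?_⟩
      rw [← ContinuousLinearMap.mul_apply, u.mul_inv, ContinuousLinearMap.one_apply]
  · rintro ⟨⟨c, hc, hb⟩, hd⟩
    have hinj : Function.Injective S := by
      intro x y hxy
      have h1 : c * ‖x - y‖ ≤ ‖S (x - y)‖ := hb _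
      rw [map_sub, hxy, sub_self, norm_zero] at h1
      have h2 : ‖x - y‖ ≤ 0 := by nlinarith [norm_nonneg (x - y)]
      rwa [← sub_eq_zero, ← norm_le_zero_iff]
    have hanti : AntilipschitzWith (⟨c, hc.le⟩ : NNReal)⁻¹ S := by
      apply S.antilipschitz_of_bound
      intro x
      have h := hb x
      show ‖x‖ ≤ c⁻¹ * ‖S x‖
      rw [le_inv_mul_iff₀ hc]
      linarith
    have hclosed : IsClosed (Set.range S) :=
      hanti.isClosed_range S.uniformContinuous
    have hsurj : Function.Surjective S := by
      rw [← Set.range_eq_univ, ← hclosed.closure_eq]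
      exact hd.closure_eq ▸ rfl
    let e := ContinuousLinearEquiv.ofBijective S
      (LinearMap.ker_eq_bot.mpr hinj) (LinearMap.range_eq_top.mpr hsurj)
    have he : (e : X →L[ℂ] X) = S := by ext x; rfl
    refine ⟨⟨(e : X →L[ℂ] X), (e.symm : X →L[ℂ] X), ?_, ?_⟩, he⟩
    · ext x; simp [ContinuousLinearMap.mul_apply]
    · ext x; simp [ContinuousLinearMap.mul_apply]

/-- Failure of boundedness below is detected on a countable dense set. -/
private lemma clm_not_bddBelow_iff (u : ℕ → X) (hu : DenseRange u) (S : X →L[ℂ] X) :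
    (¬ ∃ c > 0, ∀ x, c * ‖x‖ ≤ ‖S x‖) ↔
      ∀ n : ℕ, ∃ m : ℕ, ‖S (u m)‖ < ((n : ℝ) + 1)⁻¹ * ‖u m‖ := by
  constructor
  · intro h n
    push_neg at h
    obtain ⟨x, hx⟩ := h ((n : ℝ) + 1)⁻¹ (by positivity)
    have hU : IsOpen {y : X | ‖S y‖ < ((n : ℝ) + 1)⁻¹ * ‖y‖} :=
      isOpen_lt S.continuous.norm (continuous_const.mul continuous_norm)
    exact hu.exists_mem_open hU ⟨x, hx⟩
  · rintro h ⟨c, hc, hb⟩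
    obtain ⟨n, hn⟩ := exists_nat_gt c⁻¹
    obtain ⟨m, hm⟩ := h n
    have hum : 0 < ‖u m‖ := by
      by_contra h0
      push_neg at h0
      have h00 : ‖u m‖ = 0 := le_antisymm h0 (norm_nonneg _)
      rw [h00, mul_zero] at hm
      exact absurd hm (not_lt.mpr (norm_nonneg _))
    have h1 : c * ‖u m‖ ≤ ‖S (u m)‖ := hb _
    have h2 : ((n : ℝ) + 1)⁻¹ < c := by
      have h3 : c⁻¹ < (n : ℝ) + 1 := hn.trans (lt_add_one _)
      have h4 : (0 : ℝ) < c⁻¹ := inv_pos.mpr hc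
      calc ((n : ℝ) + 1)⁻¹ < (c⁻¹)⁻¹ := inv_strictAnti₀ h4 h3
        _ = c := inv_inv c
    nlinarith

/-- Density of the range is detected on a countable dense set. -/
private lemma clm_denseRange_iff (u : ℕ → X) (hu : DenseRange u) (S : X →L[ℂ] X) :
    DenseRange S ↔ ∀ m k : ℕ, ∃ j : ℕ, ‖S (u j) - u m‖ < ((k : ℝ) + 1)⁻¹ := by
  constructor
  · intro h m k
    have hmem := h (u m)
    rw [Metric.mem_closure_iff] at hmem
    obtain ⟨b, ⟨y, rfl⟩, hb⟩ := hmem _ (show (0:ℝ) < ((k : ℝ) + 1)⁻¹ by positivity)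
    have hy : ‖S y - u m‖ < ((k : ℝ) + 1)⁻¹ := by
      rwa [dist_comm, dist_eq_norm] at hb
    have hU : IsOpen {x : X | ‖S x - u m‖ < ((k : ℝ) + 1)⁻¹} :=
      isOpen_lt ((S.continuous.sub continuous_const).norm) continuous_const
    exact hu.exists_mem_open hU ⟨y, hy⟩
  · intro h y
    rw [Metric.mem_closure_iff]
    intro ε hε
    obtain ⟨m, hm⟩ := Metric.denseRange_iff.mp hu y (ε / 2) (by positivity)
    obtain ⟨k, hk⟩ := exists_nat_gt (ε / 2)⁻¹
    have hk2 : ((k : ℝ) + 1)⁻¹ < ε / 2 := by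
      have h3 : (ε / 2)⁻¹ < (k : ℝ) + 1 := hk.trans (lt_add_one _)
      have h4 : (0 : ℝ) < (ε / 2)⁻¹ := by positivity
      calc ((k : ℝ) + 1)⁻¹ < ((ε / 2)⁻¹)⁻¹ := inv_strictAnti₀ h4 h3
        _ = ε / 2 := inv_inv _
    obtain ⟨j, hj⟩ := h m k
    refine ⟨S (u j), Set.mem_range_self _, ?_⟩
    calc dist y (S (u j)) ≤ dist y (u m) + dist (u m) (S (u j)) := dist_triangle _ _ _
      _ < ε / 2 + ε / 2 := by
          have hd : dist (u m) (S (u j)) = ‖S (u j) - u m‖ := by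
            rw [dist_comm, dist_eq_norm]
          rw [hd]; exact add_lt_add hm (hj.trans hk2)
      _ = ε := by ring

end Aux

/-- Type synonym for `X →L[ℂ] X` carrying the strong operator topology. -/
private def SOTS (X : Type*) [NormedAddCommGroup X] [NormedSpace ℂ X] : Type _ :=
  X →L[ℂ] X

private noncomputable instance SOTS.instTop (X : Type*) [NormedAddCommGroup X] [NormedSpace ℂ X] :
    TopologicalSpace (SOTS X) := SOT ℂ X

private def SOTS.toCLM {X : Type*} [NormedAddCommGroup X] [NormedSpace ℂ X]
    (T : SOTS X) : X →L[ℂ] X := T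

private lemma SOTS.continuous_eval {X : Type*} [NormedAddCommGroup X]
    [NormedSpace ℂ X] (x : X) : Continuous fun T : SOTS X => T.toCLM x := by
  have h1 : Continuous fun T : SOTS X => ((T.toCLM : X → X)) :=
    continuous_induced_dom
  exact (continuous_apply x).comp h1

/-- `Δ = {(T, λ) ∈ L(X) × D : λ ∈ σ(T)}` is Borel for the strong operator
topology. -/
theorem Delta_measurableSet
    {X : Type*} [NormedAddCommGroup X] [NormedSpace ℂ X] [CompleteSpace X]
    [TopologicalSpace.SeparableSpace X] :
    @MeasurableSet ((X →L[ℂ] X) × (closedBall (0 : ℂ) 1)) (@borel _ (SOTprodD X))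
      {p : (X →L[ℂ] X) × (closedBall (0 : ℂ) 1) | (p.2 : ℂ) ∈ spectrum ℂ p.1} := by
  haveI : Nonempty X := ⟨0⟩
  set u : ℕ → X := TopologicalSpace.denseSeq X with hu_def
  have hu : DenseRange u := TopologicalSpace.denseRange_denseSeq X
  letI mP : MeasurableSpace (SOTS X × ↥(closedBall (0 : ℂ) 1)) := borel _
  haveI bP : BorelSpace (SOTS X × ↥(closedBall (0 : ℂ) 1)) := ⟨rfl⟩
  -- the "resolvent-style" operator associated to a pair
  set Sp : (SOTS X × ↥(closedBall (0 : ℂ) 1)) → (X →L[ℂ] X) :=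
    fun p => algebraMap ℂ (X →L[ℂ] X) (p.2 : ℂ) - p.1.toCLM with hSp_def
  -- continuity of evaluation of `Sp` at a fixed point
  have hcont : ∀ x : X, Continuous fun p : SOTS X × ↥(closedBall (0 : ℂ) 1) =>
      Sp p x := by
    intro x
    have heq : (fun p : SOTS X × ↥(closedBall (0 : ℂ) 1) => Sp p x)
        = fun p => (p.2 : ℂ) • x - p.1.toCLM x := by
      funext p
      simp [hSp_def, Algebra.algebraMap_eq_smul_one, ContinuousLinearMap.sub_apply,
        ContinuousLinearMap.smul_apply, ContinuousLinearMap.one_apply]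
    rw [heq]
    exact (((continuous_subtype_val.comp continuous_snd).smul continuous_const)).sub
      ((SOTS.continuous_eval x).comp continuous_fst)
  have key : MeasurableSet
      {p : SOTS X × ↥(closedBall (0 : ℂ) 1) | (p.2 : ℂ) ∈ spectrum ℂ p.1.toCLM} := by
    have hset : {p : SOTS X × ↥(closedBall (0 : ℂ) 1) |
          (p.2 : ℂ) ∈ spectrum ℂ p.1.toCLM}
        = (⋂ n : ℕ, ⋃ m : ℕ, {p : SOTS X × ↥(closedBall (0 : ℂ) 1) |
              ‖Sp p (u m)‖ < ((n : ℝ) + 1)⁻¹ * ‖u m‖})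
          ∪ ⋃ m : ℕ, ⋃ k : ℕ, ⋂ j : ℕ, {p : SOTS X × ↥(closedBall (0 : ℂ) 1) |
              ((k : ℝ) + 1)⁻¹ ≤ ‖Sp p (u j) - u m‖} := by
      ext p
      simp only [Set.mem_setOf_eq, Set.mem_union, Set.mem_iInter, Set.mem_iUnion]
      rw [spectrum.mem_iff, show algebraMap ℂ (X →L[ℂ] X) (p.2 : ℂ) - p.1.toCLM = Sp p from rfl,
        isUnit_iff_CLM, not_and_or, clm_not_bddBelow_iff u hu, clm_denseRange_iff u hu]
      constructor
      · rintro (h | h)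
        · exact Or.inl h
        · push_neg at h
          obtain ⟨m, k, hk⟩ := h
          exact Or.inr ⟨m, k, hk⟩
      · rintro (h | ⟨m, k, hk⟩)
        · exact Or.inl h
        · refine Or.inr ?_
          push_neg
          exact ⟨m, k, hk⟩
    rw [hset]
    apply MeasurableSet.union
    · refine MeasurableSet.iInter fun n => MeasurableSet.iUnion fun m => ?_
      exact (isOpen_lt (hcont (u m)).norm continuous_const).measurableSet
    · refine MeasurableSet.iUnion fun m => MeasurableSet.iUnion fun k =>
        MeasurableSet.iInter fun j => ?_
      exact (isClosed_le continuous_const ((hcont (u j)).sub continuous_const).norm).measurableSet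
  exact key
end

section
/- Let X be a separable complex Banach space. The spectrum map σ : L(X) → K(D), T ↦ {λ ∈ D : T − λI not invertible}, is Borel measurable when L(X) carries the strong operator topology and K(D) the Vietoris (Hausdorff) topology. Equivalently, for every open V ⊆ D, the set E_V = {T ∈ L(X) : σ(T) ∩ V ≠ ∅} is Borel in (L(X), SOT). -/
open Metric

/-- `K(D)`: the compact subsets of the closed unit disc `D ⊆ ℂ`. -/
abbrev KD : Type := { K : Set ℂ // IsCompact K ∧ K ⊆ closedBall (0 : ℂ) 1 }

/-- The Vietoris topology on `K(D)`. -/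
def vietoris : TopologicalSpace KD :=
  TopologicalSpace.generateFrom
    ({s : Set KD | ∃ U : Set ℂ, IsOpen U ∧ s = {K : KD | (K : Set ℂ) ⊆ U}} ∪
     {s : Set KD | ∃ U : Set ℂ, IsOpen U ∧ s = {K : KD | ((K : Set ℂ) ∩ U).Nonempty}})

/-- The spectrum restricted to the closed unit disc, as an element of `K(D)`. -/
noncomputable def sigmaD {X : Type*} [NormedAddCommGroup X] [NormedSpace ℂ X]
    [CompleteSpace X] (T : X →L[ℂ] X) : KD :=
  ⟨spectrum ℂ T ∩ closedBall 0 1,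
    (spectrum.isCompact T).inter_right Metric.isClosed_closedBall, Set.inter_subset_right⟩

set_option linter.unusedSectionVars false
set_option maxHeartbeats 2000000

open Set
open scoped ENNReal

namespace SpectrumBorelProof

section aux
variable {X : Type*} [NormedAddCommGroup X] [NormedSpace ℂ X] [CompleteSpace X]

/-- Quantitative invertibility: bounded below by `c` and the image of the unit ball
is `c`-dense at the origin. -/
def Pq (S : X →L[ℂ] X) (c : ℝ) : Prop :=
  (∀ x, c * ‖x‖ ≤ ‖S x‖) ∧ ∀ y : X, ‖y‖ < c → y ∈ closure (S '' closedBall 0 1)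

lemma Pq.mono {S : X →L[ℂ] X} {c c' : ℝ} (h : Pq S c) (hc : c' ≤ c) : Pq S c' :=
  ⟨fun x => le_trans (by nlinarith [norm_nonneg x]) (h.1 x),
   fun y hy => h.2 y (lt_of_lt_of_le hy hc)⟩

lemma isUnit_of_Pq {S : X →L[ℂ] X} {c : ℝ} (hc : 0 < c) (h : Pq S c) : IsUnit S := by
  rw [ContinuousLinearMap.isUnit_iff_bijective]
  have hinj : Function.Injective S := by
    intro x y hxy
    have h1 : c * ‖x - y‖ ≤ ‖S (x - y)‖ := h.1 _
    rw [map_sub, hxy, sub_self, norm_zero] at h1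
    have : ‖x - y‖ ≤ 0 := by nlinarith [norm_nonneg (x - y)]
    rwa [← sub_eq_zero, ← norm_le_zero_iff]
  refine ⟨hinj, ?_⟩
  have hrange : IsClosed (Set.range S) := by
    have hanti : AntilipschitzWith ⟨c⁻¹, by positivity⟩ S := by
      apply ContinuousLinearMap.antilipschitz_of_bound
      intro x
      have h1 := h.1 x
      change ‖x‖ ≤ c⁻¹ * ‖S x‖
      rw [inv_mul_eq_div, le_div_iff₀ hc]
      linarith
    exact hanti.isClosed_range S.uniformContinuous
  intro y
  have key : ∀ z : X, ‖z‖ < c → z ∈ Set.range S := by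
    intro z hz
    have : z ∈ closure (S '' closedBall 0 1) := h.2 z hz
    have h2 : closure (S '' closedBall 0 1) ⊆ Set.range S := by
      rw [← hrange.closure_eq]
      exact closure_mono (Set.image_subset_range _ _)
    exact h2 this
  set t : ℝ := c / (2 * (‖y‖ + 1)) with ht
  have hy1 : (0:ℝ) < ‖y‖ + 1 := by positivity
  have htpos : 0 < t := by positivity
  have hty : ‖(t : ℂ) • y‖ < c := by
    rw [norm_smul, Complex.norm_real, Real.norm_eq_abs, abs_of_pos htpos]
    calc t * ‖y‖ < t * (2 * (‖y‖ + 1)) := by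
          apply mul_lt_mul_of_pos_left _ htpos
          nlinarith [norm_nonneg y]
      _ = c := by rw [ht, div_mul_cancel₀]; positivity
  obtain ⟨x, hx⟩ := key _ hty
  exact ⟨(t : ℂ)⁻¹ • x, by
    rw [map_smul, hx, smul_smul, inv_mul_cancel₀ (by exact_mod_cast htpos.ne'), one_smul]⟩

lemma Pq_of_inv {u : (X →L[ℂ] X)ˣ} {c : ℝ} (hc : 0 < c)
    (hinv : ‖(↑u⁻¹ : X →L[ℂ] X)‖ ≤ c⁻¹) : Pq (↑u : X →L[ℂ] X) c := by
  constructor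
  · intro x
    have h1 : (↑u⁻¹ : X →L[ℂ] X) ((↑u : X →L[ℂ] X) x) = x := by
      rw [← ContinuousLinearMap.mul_apply, u.inv_mul, ContinuousLinearMap.one_apply]
    have h2 : ‖x‖ ≤ c⁻¹ * ‖(↑u : X →L[ℂ] X) x‖ := by
      calc ‖x‖ = ‖(↑u⁻¹ : X →L[ℂ] X) ((↑u : X →L[ℂ] X) x)‖ := by rw [h1]
        _ ≤ ‖(↑u⁻¹ : X →L[ℂ] X)‖ * ‖(↑u : X →L[ℂ] X) x‖ :=
            ContinuousLinearMap.le_opNorm _ _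
        _ ≤ c⁻¹ * ‖(↑u : X →L[ℂ] X) x‖ := by
            apply mul_le_mul_of_nonneg_right hinv (norm_nonneg _)
    calc c * ‖x‖ ≤ c * (c⁻¹ * ‖(↑u : X →L[ℂ] X) x‖) :=
          mul_le_mul_of_nonneg_left h2 hc.le
      _ = ‖(↑u : X →L[ℂ] X) x‖ := by field_simp
  · intro y hy
    apply subset_closure
    refine ⟨(↑u⁻¹ : X →L[ℂ] X) y, ?_, ?_⟩
    · rw [mem_closedBall_zero_iff]
      calc ‖(↑u⁻¹ : X →L[ℂ] X) y‖ ≤ ‖(↑u⁻¹ : X →L[ℂ] X)‖ * ‖y‖ :=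
            ContinuousLinearMap.le_opNorm _ _
        _ ≤ c⁻¹ * c := by
            apply mul_le_mul hinv hy.le (norm_nonneg _) (by positivity)
        _ = 1 := by field_simp
    · rw [← ContinuousLinearMap.mul_apply, u.mul_inv, ContinuousLinearMap.one_apply]

lemma inv_norm_le_of_Pq {u : (X →L[ℂ] X)ˣ} {c : ℝ} (hc : 0 < c)
    (h1 : ∀ x, c * ‖x‖ ≤ ‖(↑u : X →L[ℂ] X) x‖) : ‖(↑u⁻¹ : X →L[ℂ] X)‖ ≤ c⁻¹ := by
  apply ContinuousLinearMap.opNorm_le_bound _ (by positivity)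
  intro y
  have h2 : (↑u : X →L[ℂ] X) ((↑u⁻¹ : X →L[ℂ] X) y) = y := by
    rw [← ContinuousLinearMap.mul_apply, u.mul_inv, ContinuousLinearMap.one_apply]
  have := h1 ((↑u⁻¹ : X →L[ℂ] X) y)
  rw [h2] at this
  rw [inv_mul_eq_div, le_div_iff₀ hc]
  linarith

lemma exists_Pq_of_isUnit {S : X →L[ℂ] X} (h : IsUnit S) :
    ∃ c : ℝ, 0 < c ∧ Pq S c := by
  set u := h.unit with hu
  set c : ℝ := (‖(↑u⁻¹ : X →L[ℂ] X)‖ + 1)⁻¹ with hcdef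
  have hpos : (0:ℝ) < ‖(↑u⁻¹ : X →L[ℂ] X)‖ + 1 := by positivity
  have hc : 0 < c := by positivity
  refine ⟨c, hc, ?_⟩
  have : Pq (↑u : X →L[ℂ] X) c := by
    apply Pq_of_inv hc
    rw [hcdef, inv_inv]
    linarith
  rwa [h.unit_spec] at this



lemma Pq_perturb {S E : X →L[ℂ] X} {c ε : ℝ} (hc : 0 < c) (h : Pq S c)
    (hE : ‖E‖ ≤ ε) (hεc : ε < c) : Pq (S + E) (c - ε) := by
  have hε0 : 0 ≤ ε := le_trans (norm_nonneg E) hE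
  obtain ⟨u, hu⟩ := isUnit_of_Pq hc h
  have hinv : ‖(↑u⁻¹ : X →L[ℂ] X)‖ ≤ c⁻¹ := by
    apply inv_norm_le_of_Pq hc
    intro x; rw [hu]; exact h.1 x
  set t : X →L[ℂ] X := (↑u⁻¹ : X →L[ℂ] X) * E with htdef
  have hct : ‖t‖ ≤ c⁻¹ * ε := by
    calc ‖t‖ ≤ ‖(↑u⁻¹ : X →L[ℂ] X)‖ * ‖E‖ := norm_mul_le _ _
      _ ≤ c⁻¹ * ε := by
          apply mul_le_mul hinv hE (norm_nonneg _) (by positivity)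
  have htlt : ‖t‖ < 1 := by
    apply lt_of_le_of_lt hct
    rw [inv_mul_eq_div, div_lt_one hc]; exact hεc
  set v : (X →L[ℂ] X)ˣ := Units.oneSub (-t) (by rwa [norm_neg]) with hvdef
  have hv : (↑v : X →L[ℂ] X) = 1 + t := by
    rw [hvdef, Units.val_oneSub, sub_neg_eq_add]
  set w : (X →L[ℂ] X)ˣ := u * v with hwdef
  have hw : (↑w : X →L[ℂ] X) = S + E := by
    rw [hwdef, Units.val_mul, hv, mul_add, mul_one, htdef, ← mul_assoc, hu]
    congr 1
    rw [← hu, u.mul_inv, one_mul]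
  -- bound on ‖v⁻¹‖
  have hvinv : ‖(↑v⁻¹ : X →L[ℂ] X)‖ * (1 - ‖t‖) ≤ 1 := by
    have hid : (↑v⁻¹ : X →L[ℂ] X) = 1 - t * (↑v⁻¹ : X →L[ℂ] X) := by
      have h1 : (↑v : X →L[ℂ] X) * (↑v⁻¹ : X →L[ℂ] X) = 1 := v.mul_inv
      rw [hv, add_mul, one_mul] at h1
      linear_combination (norm := module) h1
    have : ‖(↑v⁻¹ : X →L[ℂ] X)‖ ≤ 1 + ‖t‖ * ‖(↑v⁻¹ : X →L[ℂ] X)‖ := by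
      calc ‖(↑v⁻¹ : X →L[ℂ] X)‖ = ‖(1 : X →L[ℂ] X) - t * (↑v⁻¹ : X →L[ℂ] X)‖ := by
            rw [← hid]
        _ ≤ ‖(1 : X →L[ℂ] X)‖ + ‖t * (↑v⁻¹ : X →L[ℂ] X)‖ := norm_sub_le _ _
        _ ≤ 1 + ‖t‖ * ‖(↑v⁻¹ : X →L[ℂ] X)‖ := by
            gcongr
            · rw [ContinuousLinearMap.one_def]; exact ContinuousLinearMap.norm_id_le
            · exact norm_mul_le _ _
    nlinarith
  have hwinv : ‖(↑w⁻¹ : X →L[ℂ] X)‖ ≤ (c - ε)⁻¹ := by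
    have h1 : (↑w⁻¹ : X →L[ℂ] X) = (↑v⁻¹ : X →L[ℂ] X) * (↑u⁻¹ : X →L[ℂ] X) := by
      rw [hwdef, mul_inv_rev, Units.val_mul]
    set a := ‖(↑v⁻¹ : X →L[ℂ] X)‖ with ha
    set b := ‖(↑u⁻¹ : X →L[ℂ] X)‖ with hb
    have ha0 : 0 ≤ a := norm_nonneg _
    have hb0 : 0 ≤ b := norm_nonneg _
    have h2 : ‖(↑w⁻¹ : X →L[ℂ] X)‖ ≤ a * b := by rw [h1]; exact norm_mul_le _ _
    have ht0 : 0 ≤ ‖t‖ := norm_nonneg _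
    have hcε : 0 < c - ε := by linarith
    -- a * (1 - ‖t‖) ≤ 1, ‖t‖ ≤ c⁻¹ε, b ≤ c⁻¹ ⟹ a*b ≤ (c-ε)⁻¹
    apply le_trans h2
    have h3 : a * (c - ε) ≤ c := by
      have h4 : a * ‖t‖ * c ≤ a * ε := by
        have := mul_le_mul_of_nonneg_left hct ha0
        calc a * ‖t‖ * c ≤ a * (c⁻¹ * ε) * c := by nlinarith
          _ = a * ε * (c⁻¹ * c) := by ring
          _ = a * ε := by rw [inv_mul_cancel₀ hc.ne', mul_one]
      nlinarith
    rw [← one_div, le_div_iff₀ hcε]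
    have h5 : c * b ≤ 1 := by
      have := mul_le_mul_of_nonneg_left hinv hc.le
      rwa [mul_inv_cancel₀ hc.ne'] at this
    nlinarith
  have := Pq_of_inv (u := w) (by linarith : (0:ℝ) < c - ε) hwinv
  rwa [hw] at this



noncomputable def sgen (T : X →L[ℂ] X) (lam : ℂ) : X →L[ℂ] X :=
  algebraMap ℂ (X →L[ℂ] X) lam - T

lemma sgen_apply (T : X →L[ℂ] X) (lam : ℂ) (x : X) :
    sgen T lam x = lam • x - T x := by
  simp [sgen, Algebra.algebraMap_eq_smul_one]

lemma sgen_sub_norm (T : X →L[ℂ] X) (lam mu : ℂ) :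
    ‖sgen T lam - sgen T mu‖ ≤ ‖lam - mu‖ := by
  have h : sgen T lam - sgen T mu = (lam - mu) • (1 : X →L[ℂ] X) := by
    simp only [sgen, Algebra.algebraMap_eq_smul_one]
    module
  rw [h]
  refine le_trans (ContinuousLinearMap.opNorm_smul_le _ _) ?_
  calc ‖lam - mu‖ * ‖(1 : X →L[ℂ] X)‖ ≤ ‖lam - mu‖ * 1 := by
        gcongr
        rw [ContinuousLinearMap.one_def]
        exact ContinuousLinearMap.norm_id_le
    _ = ‖lam - mu‖ := mul_one _

lemma not_mem_spectrum_iff (T : X →L[ℂ] X) (lam : ℂ) :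
    lam ∉ spectrum ℂ T ↔ IsUnit (sgen T lam) := spectrum.notMem_iff

/-- the key countable characterization of spectral disjointness from a compact set -/
lemma spectrum_inter_eq_empty_iff (T : X →L[ℂ] X) {K K₀ : Set ℂ}
    (hK : IsCompact K) (hK₀K : K₀ ⊆ K)
    (hdense : ∀ lam ∈ K, ∀ ε > (0:ℝ), ∃ mu ∈ K₀, ‖lam - mu‖ < ε) :
    spectrum ℂ T ∩ K = ∅ ↔
      ∃ n : ℕ, ∀ mu ∈ K₀, Pq (sgen T mu) (1 / (n + 1)) := by
  constructor
  · intro hdisj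
    have hcov : ∀ lam ∈ K, ∃ c > (0:ℝ), ∀ mu : ℂ, ‖mu - lam‖ < c → Pq (sgen T mu) c := by
      intro lam hlam
      have hnot : lam ∉ spectrum ℂ T := fun h =>
        (Set.eq_empty_iff_forall_notMem.1 hdisj lam ⟨h, hlam⟩)
      obtain ⟨c₀, hc₀, hP⟩ := exists_Pq_of_isUnit ((not_mem_spectrum_iff T lam).1 hnot)
      refine ⟨c₀ / 3, by positivity, ?_⟩
      intro mu hmu
      have hE : ‖sgen T mu - sgen T lam‖ ≤ c₀ / 3 :=
        le_trans (sgen_sub_norm T mu lam) hmu.le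
      have hpert := Pq_perturb hc₀ hP hE (by linarith)
      have heq : sgen T lam + (sgen T mu - sgen T lam) = sgen T mu := by abel
      rw [heq] at hpert
      exact hpert.mono (by linarith)
    choose! c hc0 hcP using hcov
    have hcover : K ⊆ ⋃ lam ∈ K, ball lam (c lam) := by
      intro lam hlam
      exact Set.mem_biUnion hlam (mem_ball_self (hc0 lam hlam))
    obtain ⟨b, hbK, hbfin, hbcov⟩ :=
      hK.elim_finite_subcover_image (fun lam _ => isOpen_ball) hcover
    rcases Set.eq_empty_or_nonempty b with hb | hb
    · -- then K is empty
      subst hb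
      simp only [Set.mem_empty_iff_false, Set.iUnion_of_empty, Set.iUnion_empty,
        Set.subset_empty_iff] at hbcov
      refine ⟨0, fun mu hmu => absurd (hK₀K hmu) ?_⟩
      rw [hbcov]; exact Set.notMem_empty mu
    · classical
      set bf : Finset ℂ := hbfin.toFinset with hbf
      have hbfne : (bf.image c).Nonempty := by
        refine Finset.image_nonempty.2 ?_
        rwa [hbf, Set.Finite.toFinset_nonempty]
      set cmin : ℝ := (bf.image c).min' hbfne with hcmin_def
      have hcmin_le : ∀ lam ∈ b, cmin ≤ c lam := by
        intro lam hlam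
        apply Finset.min'_le
        exact Finset.mem_image_of_mem c (by rwa [hbf, Set.Finite.mem_toFinset])
      have hcmin_pos : 0 < cmin := by
        obtain ⟨lam₀, hlam₀, hlam₀eq⟩ := Finset.mem_image.1 ((bf.image c).min'_mem hbfne)
        rw [hcmin_def, ← hlam₀eq]
        exact hc0 lam₀ (hbK (by rwa [hbf, Set.Finite.mem_toFinset] at hlam₀))
      obtain ⟨n, hn⟩ := exists_nat_gt cmin⁻¹
      have hnle : 1 / ((n:ℝ) + 1) ≤ cmin := by
        rw [div_le_iff₀ (by positivity), ← div_le_iff₀' hcmin_pos, one_div]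
        exact le_trans hn.le (by linarith)
      refine ⟨n, fun mu hmu => ?_⟩
      have hmuK : mu ∈ K := hK₀K hmu
      obtain ⟨lam, hlamb, hmuball⟩ := Set.mem_iUnion₂.1 (hbcov hmuK)
      have hdist : ‖mu - lam‖ < c lam := by
        rw [← dist_eq_norm]; exact hmuball
      exact (hcP lam (hbK hlamb) mu hdist).mono (le_trans hnle (hcmin_le lam hlamb))
  · rintro ⟨n, hn⟩
    rw [Set.eq_empty_iff_forall_notMem]
    rintro lam ⟨hspec, hlam⟩
    have hpos : (0:ℝ) < 1 / (n + 1) := by positivity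
    obtain ⟨mu, hmu, hmudist⟩ := hdense lam hlam (1 / (2 * (n + 1))) (by positivity)
    have hP := hn mu hmu
    have hE : ‖sgen T lam - sgen T mu‖ ≤ 1 / (2 * (n + 1)) :=
      le_trans (sgen_sub_norm T lam mu) hmudist.le
    have hεc : 1 / (2 * ((n:ℝ) + 1)) < 1 / (n + 1) := by
      rw [div_lt_div_iff₀ (by positivity) (by positivity)]
      nlinarith [Nat.cast_nonneg (α := ℝ) n]
    have hpert := Pq_perturb hpos hP hE hεc
    have heq : sgen T mu + (sgen T lam - sgen T mu) = sgen T lam := by abel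
    rw [heq] at hpert
    have hunit := isUnit_of_Pq (c := 1 / (n + 1) - 1 / (2 * (n + 1))) (by
      rw [sub_pos]; exact hεc) hpert
    exact (not_mem_spectrum_iff T lam).2 hunit hspec



/-- countable reformulation of the second clause of `Pq`. -/
lemma Pq2_iff (S : X →L[ℂ] X) (c : ℝ) {D' : Set X} (hD : Dense D') :
    (∀ y : X, ‖y‖ < c → y ∈ closure (S '' closedBall 0 1)) ↔
    ∀ d ∈ D', ‖d‖ < c → ∀ m : ℕ, ∃ x, ‖x‖ ≤ 1 ∧ ‖S x - d‖ < 1 / (m + 1) := by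
  constructor
  · intro h d hd hdc m
    have hmem := h d hdc
    rw [Metric.mem_closure_iff] at hmem
    obtain ⟨b, hb, hdb⟩ := hmem (1 / (m + 1)) (by positivity)
    obtain ⟨x, hx, rfl⟩ := hb
    exact ⟨x, mem_closedBall_zero_iff.1 hx, by rwa [dist_comm, dist_eq_norm] at hdb⟩
  · intro h y hy
    rw [Metric.mem_closure_iff]
    intro ε hε
    obtain ⟨m, hm⟩ := exists_nat_gt (2 / ε)
    have hminv : 1 / ((m:ℝ) + 1) < ε / 2 := by
      rw [div_lt_div_iff₀ (by positivity) (by positivity)]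
      have h2 : 2 / ε < (m:ℝ) + 1 := lt_of_lt_of_le hm (by linarith)
      rw [div_lt_iff₀ hε] at h2
      linarith
    set δ : ℝ := min (ε / 2) (c - ‖y‖) with hδ
    have hδpos : 0 < δ := lt_min (by positivity) (by linarith)
    obtain ⟨d, hdball, hdD⟩ := (Metric.dense_iff.1 hD y δ hδpos)
    have hdy : dist y d < δ := by rwa [mem_ball, dist_comm] at hdball
    have hdc : ‖d‖ < c := by
      have h1 : ‖d‖ ≤ ‖y‖ + dist y d := by
        rw [dist_eq_norm]
        calc ‖d‖ = ‖y - (y - d)‖ := by rw [sub_sub_cancel]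
          _ ≤ ‖y‖ + ‖y - d‖ := norm_sub_le _ _
      have := lt_of_lt_of_le hdy (min_le_right _ _)
      linarith
    obtain ⟨x, hx1, hx2⟩ := h d hdD hdc m
    refine ⟨S x, ⟨x, mem_closedBall_zero_iff.2 hx1, rfl⟩, ?_⟩
    calc dist y (S x) ≤ dist y d + dist d (S x) := dist_triangle _ _ _
      _ < δ + 1 / (m + 1) := by
          apply add_lt_add hdy
          rwa [dist_comm, dist_eq_norm]
      _ ≤ ε / 2 + ε / 2 := add_le_add (min_le_left _ _) hminv.le
      _ = ε := by ring

variable [TopologicalSpace.SeparableSpace X]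

lemma continuous_eval_SOT (x : X) :
    @Continuous (X →L[ℂ] X) X (SOT ℂ X) _ (fun T : X →L[ℂ] X => T x) := by
  letI := SOT ℂ X
  exact (continuous_apply x).comp continuous_induced_dom

lemma measurable_Pq_set (lam : ℂ) (c : ℝ) :
    @MeasurableSet (X →L[ℂ] X) (@borel _ (SOT ℂ X)) {T | Pq (sgen T lam) c} := by
  letI tS : TopologicalSpace (X →L[ℂ] X) := SOT ℂ X
  letI mS : MeasurableSpace (X →L[ℂ] X) := borel _
  haveI : BorelSpace (X →L[ℂ] X) := ⟨rfl⟩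
  obtain ⟨D', hD'c, hD'd⟩ := TopologicalSpace.exists_countable_dense X
  have hev : ∀ x : X, Continuous (fun T : X →L[ℂ] X => lam • x - T x) :=
    fun x => continuous_const.sub (continuous_eval_SOT x)
  have hset : {T : X →L[ℂ] X | Pq (sgen T lam) c} =
      (⋂ x : X, {T : X →L[ℂ] X | c * ‖x‖ ≤ ‖lam • x - T x‖}) ∩
      (⋂ d ∈ D', ⋂ m : ℕ, {T : X →L[ℂ] X | ‖d‖ < c →
        ∃ x, ‖x‖ ≤ 1 ∧ ‖(lam • x - T x) - d‖ < 1 / (m + 1)}) := by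
    ext T
    simp only [Set.mem_inter_iff, Set.mem_iInter, Set.mem_setOf_eq]
    constructor
    · intro h
      refine ⟨fun x => by rw [← sgen_apply T lam x]; exact h.1 x, fun d hd m hdc => ?_⟩
      have := (Pq2_iff (sgen T lam) c hD'd).1 h.2 d hd hdc m
      simpa only [sgen_apply] using this
    · intro ⟨h1, h2⟩
      constructor
      · intro x; rw [sgen_apply]; exact h1 x
      · rw [Pq2_iff (sgen T lam) c hD'd]
        intro d hd hdc m
        simpa only [sgen_apply] using h2 d hd m hdc
  rw [hset]
  apply MeasurableSet.inter
  · apply IsClosed.measurableSet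
    apply isClosed_iInter
    intro x
    exact isClosed_le continuous_const (hev x).norm
  · apply MeasurableSet.biInter hD'c
    intro d _
    apply MeasurableSet.iInter
    intro m
    by_cases hdc : ‖d‖ < c
    · have : {T : X →L[ℂ] X | ‖d‖ < c →
          ∃ x, ‖x‖ ≤ 1 ∧ ‖(lam • x - T x) - d‖ < 1 / (m + 1)} =
          ⋃ x : X, ⋃ (_ : ‖x‖ ≤ 1),
            {T : X →L[ℂ] X | ‖(lam • x - T x) - d‖ < 1 / (m + 1)} := by
        ext T
        simp only [Set.mem_setOf_eq, Set.mem_iUnion]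
        constructor
        · intro h
          obtain ⟨x, hx1, hx2⟩ := h hdc
          exact ⟨x, hx1, hx2⟩
        · rintro ⟨x, hx1, hx2⟩ _
          exact ⟨x, hx1, hx2⟩
      rw [this]
      apply IsOpen.measurableSet
      apply isOpen_iUnion; intro x; apply isOpen_iUnion; intro _
      exact isOpen_lt ((hev x).sub continuous_const).norm continuous_const
    · have : {T : X →L[ℂ] X | ‖d‖ < c →
          ∃ x, ‖x‖ ≤ 1 ∧ ‖(lam • x - T x) - d‖ < 1 / (m + 1)} = Set.univ := by
        ext T; simp only [Set.mem_setOf_eq, Set.mem_univ, iff_true]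
        intro h; exact absurd h hdc
      rw [this]; exact MeasurableSet.univ



/-- Core lemma: hitting a compact set is a Borel condition. -/
lemma measurable_hits_compact {K : Set ℂ} (hK : IsCompact K) :
    @MeasurableSet (X →L[ℂ] X) (@borel _ (SOT ℂ X))
      {T : X →L[ℂ] X | (spectrum ℂ T ∩ K).Nonempty} := by
  -- countable dense subset of K
  obtain ⟨s, hsc, hsd⟩ := TopologicalSpace.exists_countable_dense ↥K
  set K₀ : Set ℂ := Subtype.val '' s with hK₀def
  have hK₀c : K₀.Countable := hsc.image _
  have hK₀K : K₀ ⊆ K := by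
    rintro μ ⟨μ', _, rfl⟩; exact μ'.2
  have hdense : ∀ lam ∈ K, ∀ ε > (0:ℝ), ∃ mu ∈ K₀, ‖lam - mu‖ < ε := by
    intro lam hlam ε hε
    obtain ⟨μ', hμball, hμs⟩ := Metric.dense_iff.1 hsd ⟨lam, hlam⟩ ε hε
    refine ⟨↑μ', ⟨μ', hμs, rfl⟩, ?_⟩
    have := mem_ball.1 hμball
    rw [Subtype.dist_eq, dist_comm, dist_eq_norm] at this
    exact this
  have hset : {T : X →L[ℂ] X | (spectrum ℂ T ∩ K).Nonempty} =
      (⋃ n : ℕ, ⋂ mu ∈ K₀, {T : X →L[ℂ] X | Pq (sgen T mu) (1 / (n + 1))})ᶜ := by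
    ext T
    rw [Set.mem_compl_iff, Set.mem_setOf_eq, Set.nonempty_iff_ne_empty, ne_eq,
      spectrum_inter_eq_empty_iff T hK hK₀K hdense]
    apply not_congr
    simp only [Set.mem_iUnion, Set.mem_iInter, Set.mem_setOf_eq]
  rw [hset]
  apply MeasurableSet.compl
  apply MeasurableSet.iUnion
  intro n
  exact MeasurableSet.biInter hK₀c fun mu _ => measurable_Pq_set mu _



/-- hitting `U ∩ D` for an open `U` is Borel. -/
lemma measurable_hits_open {U : Set ℂ} (hU : IsOpen U) :
    @MeasurableSet (X →L[ℂ] X) (@borel _ (SOT ℂ X))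
      {T : X →L[ℂ] X | (spectrum ℂ T ∩ closedBall (0:ℂ) 1 ∩ U).Nonempty} := by
  set Kn : ℕ → Set ℂ := fun n =>
    closedBall (0:ℂ) 1 ∩ {lam : ℂ | ((n : ℝ≥0∞))⁻¹ ≤ EMetric.infEdist lam Uᶜ} with hKn
  have hKnc : ∀ n, IsCompact (Kn n) := by
    intro n
    exact (isCompact_closedBall _ _).inter_right
      (isClosed_le continuous_const EMetric.continuous_infEdist)
  have hsub : ∀ T : X →L[ℂ] X,
      spectrum ℂ T ∩ closedBall (0:ℂ) 1 ∩ U = ⋃ n, spectrum ℂ T ∩ Kn n := by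
    intro T
    ext lam
    simp only [Set.mem_inter_iff, Set.mem_iUnion, hKn, Set.mem_setOf_eq]
    constructor
    · rintro ⟨⟨hspec, hball⟩, hU'⟩
      have hpos : 0 < EMetric.infEdist lam Uᶜ := by
        change 0 < Metric.infEDist lam Uᶜ
        rw [Metric.infEDist_pos_iff_notMem_closure, hU.isClosed_compl.closure_eq]
        exact fun h => h hU'
      obtain ⟨n, hn⟩ := ENNReal.exists_inv_nat_lt hpos.ne'
      exact ⟨n, hspec, hball, hn.le⟩
    · rintro ⟨n, hspec, hball, hinf⟩
      refine ⟨⟨hspec, hball⟩, ?_⟩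
      have hpos : 0 < EMetric.infEdist lam Uᶜ := by
        refine lt_of_lt_of_le ?_ hinf
        simp [ENNReal.inv_pos]
      change 0 < Metric.infEDist lam Uᶜ at hpos
      rw [Metric.infEDist_pos_iff_notMem_closure, hU.isClosed_compl.closure_eq] at hpos
      simpa using hpos
  have : {T : X →L[ℂ] X | (spectrum ℂ T ∩ closedBall (0:ℂ) 1 ∩ U).Nonempty} =
      ⋃ n, {T : X →L[ℂ] X | (spectrum ℂ T ∩ Kn n).Nonempty} := by
    ext T
    simp only [Set.mem_setOf_eq, Set.mem_iUnion, hsub T, Set.nonempty_iUnion]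
  rw [this]
  exact MeasurableSet.iUnion fun n => measurable_hits_compact (hKnc n)

/-- the vietoris topology is generated by a countable subbasis -/
lemma vietoris_eq_countable_subbasis :
    ∃ S₀ : Set (Set KD), S₀.Countable ∧ vietoris = TopologicalSpace.generateFrom S₀ ∧
      ∀ s ∈ S₀, (∃ b : Set ℂ, IsOpen b ∧ s = {K : KD | (K : Set ℂ) ⊆ b}) ∨
                (∃ b : Set ℂ, IsOpen b ∧ s = {K : KD | ((K : Set ℂ) ∩ b).Nonempty}) := by
  obtain ⟨bb, hbc, hbne, hbbasis⟩ := TopologicalSpace.exists_countable_basis ℂ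
  set Bfam : Set (Set ℂ) := Set.sUnion '' {F : Set (Set ℂ) | F.Finite ∧ F ⊆ bb} with hBfam
  have hBc : Bfam.Countable := (Set.countable_setOf_finite_subset hbc).image _
  have hBopen : ∀ b ∈ Bfam, IsOpen b := by
    rintro b ⟨F, ⟨hFfin, hFbb⟩, rfl⟩
    exact isOpen_sUnion fun c hc => hbbasis.isOpen (hFbb hc)
  set S₀ : Set (Set KD) :=
    ((fun b => {K : KD | (K : Set ℂ) ⊆ b}) '' Bfam) ∪
    ((fun b => {K : KD | ((K : Set ℂ) ∩ b).Nonempty}) '' Bfam) with hS₀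
  refine ⟨S₀, (hBc.image _).union (hBc.image _), ?_, ?_⟩
  · apply le_antisymm
    · -- vietoris ≤ generateFrom S₀  (S₀ consists of vietoris-subbasic sets)
      rw [vietoris]
      apply TopologicalSpace.generateFrom_anti
      rintro s (⟨b, hb, rfl⟩ | ⟨b, hb, rfl⟩)
      · exact Set.mem_union_left _ ⟨b, hBopen b hb, rfl⟩
      · exact Set.mem_union_right _ ⟨b, hBopen b hb, rfl⟩
    · rw [vietoris, TopologicalSpace.le_generateFrom_iff_subset_isOpen]
      rintro s (⟨U, hU, rfl⟩ | ⟨U, hU, rfl⟩)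
      · -- {K | ↑K ⊆ U} is open in generateFrom S₀
        have heq : {K : KD | (K : Set ℂ) ⊆ U} =
            ⋃₀ {s | ∃ b ∈ Bfam, b ⊆ U ∧ s = {K : KD | (K : Set ℂ) ⊆ b}} := by
          ext K
          simp only [Set.mem_setOf_eq, Set.mem_sUnion]
          constructor
          · intro hKU
            have hcov : (K : Set ℂ) ⊆ ⋃ c ∈ {c | c ∈ bb ∧ c ⊆ U}, c := by
              intro x hx
              obtain ⟨c, hcb, hxc, hcU⟩ := hbbasis.exists_subset_of_mem_open (hKU hx) hU
              exact Set.mem_biUnion ⟨hcb, hcU⟩ hxc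
            obtain ⟨F, hFsub, hFfin, hFcov⟩ := K.2.1.elim_finite_subcover_image
              (fun c hc => hbbasis.isOpen hc.1) hcov
            refine ⟨{K' : KD | (K' : Set ℂ) ⊆ ⋃₀ F}, ⟨⋃₀ F, ?_, ?_, rfl⟩, ?_⟩
            · exact ⟨F, ⟨hFfin, fun c hc => (hFsub hc).1⟩, rfl⟩
            · exact Set.sUnion_subset fun c hc => (hFsub hc).2
            · simpa only [Set.mem_setOf_eq, Set.sUnion_eq_biUnion] using hFcov
          · rintro ⟨s, ⟨b, _, hbU, rfl⟩, hKs⟩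
            exact Set.Subset.trans hKs hbU
        rw [Set.mem_setOf_eq, heq]
        refine TopologicalSpace.GenerateOpen.sUnion _ ?_
        rintro s ⟨b, hbB, _, rfl⟩
        exact TopologicalSpace.GenerateOpen.basic _ (Set.mem_union_left _ ⟨b, hbB, rfl⟩)
      · have heq : {K : KD | ((K : Set ℂ) ∩ U).Nonempty} =
            ⋃₀ {s | ∃ b ∈ Bfam, b ⊆ U ∧ s = {K : KD | ((K : Set ℂ) ∩ b).Nonempty}} := by
          ext K
          simp only [Set.mem_setOf_eq, Set.mem_sUnion]
          constructor
          · rintro ⟨x, hxK, hxU⟩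
            obtain ⟨c, hcb, hxc, hcU⟩ := hbbasis.exists_subset_of_mem_open hxU hU
            refine ⟨{K' : KD | ((K' : Set ℂ) ∩ c).Nonempty}, ⟨c, ?_, hcU, rfl⟩, ⟨x, hxK, hxc⟩⟩
            exact ⟨{c}, ⟨Set.finite_singleton c, Set.singleton_subset_iff.2 hcb⟩, by simp⟩
          · rintro ⟨s, ⟨b, _, hbU, rfl⟩, ⟨x, hxK, hxb⟩⟩
            exact ⟨x, hxK, hbU hxb⟩
        rw [Set.mem_setOf_eq, heq]
        refine TopologicalSpace.GenerateOpen.sUnion _ ?_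
        rintro s ⟨b, hbB, _, rfl⟩
        exact TopologicalSpace.GenerateOpen.basic _ (Set.mem_union_right _ ⟨b, hbB, rfl⟩)
  · rintro s (⟨b, hb, rfl⟩ | ⟨b, hb, rfl⟩)
    · exact Or.inl ⟨b, hBopen b hb, rfl⟩
    · exact Or.inr ⟨b, hBopen b hb, rfl⟩



end aux

end SpectrumBorelProof

open SpectrumBorelProof in
/-- The spectrum map `σ : L(X) → K(D)` is Borel from the strong operator
topology to the Vietoris topology; equivalently, each set
`E_V = {T : σ(T) ∩ V ≠ ∅}` is Borel in `(L(X), SOT)`. -/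
theorem spectrum_map_borel
    {X : Type*} [NormedAddCommGroup X] [NormedSpace ℂ X] [CompleteSpace X]
    [TopologicalSpace.SeparableSpace X] :
    @Measurable (X →L[ℂ] X) KD (@borel _ (SOT ℂ X)) (@borel _ vietoris) sigmaD ∧
    ∀ V : Set ℂ, V ⊆ closedBall (0 : ℂ) 1 →
      (∃ U : Set ℂ, IsOpen U ∧ V = U ∩ closedBall (0 : ℂ) 1) →
      @MeasurableSet (X →L[ℂ] X) (@borel _ (SOT ℂ X))
        {T : X →L[ℂ] X | (spectrum ℂ T ∩ closedBall (0 : ℂ) 1 ∩ V).Nonempty} := by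
  letI : MeasurableSpace (X →L[ℂ] X) := @borel (X →L[ℂ] X) (SOT ℂ X)
  constructor
  · -- part 1 : measurability of sigmaD
    obtain ⟨S₀, hS₀c, hgen, hS₀shape⟩ := vietoris_eq_countable_subbasis
    haveI hsc : @SecondCountableTopology KD vietoris :=
      hgen ▸ TopologicalSpace.SecondCountableTopology.mk' hS₀c
    have hb : @borel KD vietoris = MeasurableSpace.generateFrom S₀ :=
      @borel_eq_generateFrom_of_subbasis KD S₀ vietoris hsc hgen
    rw [hb]
    apply measurable_generateFrom
    intro t ht
    rcases hS₀shape t ht with ⟨b, hbo, rfl⟩ | ⟨b, hbo, rfl⟩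
    · have hpre : sigmaD ⁻¹' {K : KD | (K : Set ℂ) ⊆ b} =
          {T : X →L[ℂ] X | (spectrum ℂ T ∩ (closedBall (0:ℂ) 1 ∩ bᶜ)).Nonempty}ᶜ := by
        ext T
        simp only [Set.mem_preimage, Set.mem_setOf_eq, Set.mem_compl_iff]
        show spectrum ℂ T ∩ closedBall (0:ℂ) 1 ⊆ b ↔ _
        constructor
        · rintro h ⟨x, hx1, hx2, hx3⟩
          exact hx3 (h ⟨hx1, hx2⟩)
        · intro h x ⟨hx1, hx2⟩
          by_contra hxb
          exact h ⟨x, hx1, hx2, hxb⟩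
      rw [hpre]
      exact (measurable_hits_compact
        ((isCompact_closedBall _ _).inter_right hbo.isClosed_compl)).compl
    · have hpre : sigmaD ⁻¹' {K : KD | ((K : Set ℂ) ∩ b).Nonempty} =
          {T : X →L[ℂ] X | (spectrum ℂ T ∩ closedBall (0:ℂ) 1 ∩ b).Nonempty} := rfl
      rw [hpre]
      exact measurable_hits_open hbo
  · -- part 2
    rintro V hVD ⟨U, hU, rfl⟩
    have hset : {T : X →L[ℂ] X |
        (spectrum ℂ T ∩ closedBall (0:ℂ) 1 ∩ (U ∩ closedBall (0:ℂ) 1)).Nonempty} =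
        {T : X →L[ℂ] X | (spectrum ℂ T ∩ closedBall (0:ℂ) 1 ∩ U).Nonempty} := by
      ext T
      constructor
      · rintro ⟨x, ⟨hx1, hx2⟩, hx3, _⟩; exact ⟨x, ⟨hx1, hx2⟩, hx3⟩
      · rintro ⟨x, ⟨hx1, hx2⟩, hx3⟩; exact ⟨x, ⟨hx1, hx2⟩, hx3, hx2⟩
    rw [hset]
    exact measurable_hits_open hU
end

section
/- Let X be a separable complex Banach space with a countable dense subset 𝒴 of the unit sphere. The set A = {(T, λ) ∈ L(X) × D : T − λI is not an isomorphism onto its range} equals ⋂_{k≥1} ⋃_{x∈𝒴} {(T, λ) : ‖Tx − λx‖ < 1/k}, and is therefore a Gδσ-type Borel set (a countable intersection of open sets) in (L(X), SOT) × D. -/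
open Metric

lemma cont_aux {X : Type*} [NormedAddCommGroup X] [NormedSpace ℂ X] (x : X) :
    @Continuous _ ℝ (SOTprodD X) _
      (fun p : (X →L[ℂ] X) × (closedBall (0:ℂ) 1) => ‖p.1 x - (p.2:ℂ) • x‖) := by
  letI : TopologicalSpace (X →L[ℂ] X) := SOT ℂ X
  letI : TopologicalSpace ((X →L[ℂ] X) × (closedBall (0:ℂ) 1)) := SOTprodD X
  have h1 : Continuous fun p : (X →L[ℂ] X) × (closedBall (0:ℂ) 1) => p.1 x := by
    have h0 : Continuous fun T : X →L[ℂ] X => T x :=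
      (continuous_apply x).comp continuous_induced_dom
    exact h0.comp continuous_fst
  have h2 : Continuous fun p : (X →L[ℂ] X) × (closedBall (0:ℂ) 1) => (p.2:ℂ) • x :=
    (continuous_subtype_val.comp continuous_snd).smul continuous_const
  exact (h1.sub h2).norm

/-- The set `A` of pairs `(T, λ) ∈ L(X) × D` with `T - λI` not an isomorphism
onto its range (i.e. not bounded below) is a countable intersection of sets
open in `(L(X), SOT) × D`, namely `A = ⋂_{k≥1} ⋃_{x ∈ 𝒴} {(T,λ) : ‖Tx - λx‖ < 1/k}`. -/
theorem A_eq_and_Gdelta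
    {X : Type*} [NormedAddCommGroup X] [NormedSpace ℂ X]
    [TopologicalSpace.SeparableSpace X]
    (Y : Set X) (hYc : Y.Countable) (hYs : Y ⊆ {x : X | ‖x‖ = 1})
    (hYd : ∀ x : X, ‖x‖ = 1 → x ∈ closure Y) :
    {p : (X →L[ℂ] X) × (closedBall (0 : ℂ) 1) |
        ¬ ∃ c : ℝ, 0 < c ∧ ∀ x : X, ‖x‖ = 1 →
          c ≤ ‖(p.1 - (p.2 : ℂ) • (1 : X →L[ℂ] X)) x‖} =
      (⋂ k ∈ {k : ℕ | 1 ≤ k}, ⋃ x ∈ Y,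
        {p : (X →L[ℂ] X) × (closedBall (0 : ℂ) 1) |
          ‖p.1 x - (p.2 : ℂ) • x‖ < 1 / k}) ∧
    ∃ U : ℕ → Set ((X →L[ℂ] X) × (closedBall (0 : ℂ) 1)),
      (∀ n, @IsOpen _ (SOTprodD X) (U n)) ∧
      {p : (X →L[ℂ] X) × (closedBall (0 : ℂ) 1) |
          ¬ ∃ c : ℝ, 0 < c ∧ ∀ x : X, ‖x‖ = 1 →
            c ≤ ‖(p.1 - (p.2 : ℂ) • (1 : X →L[ℂ] X)) x‖} = ⋂ n, U n := by
  have key : {p : (X →L[ℂ] X) × (closedBall (0 : ℂ) 1) |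
        ¬ ∃ c : ℝ, 0 < c ∧ ∀ x : X, ‖x‖ = 1 →
          c ≤ ‖(p.1 - (p.2 : ℂ) • (1 : X →L[ℂ] X)) x‖} =
      (⋂ k ∈ {k : ℕ | 1 ≤ k}, ⋃ x ∈ Y,
        {p : (X →L[ℂ] X) × (closedBall (0 : ℂ) 1) |
          ‖p.1 x - (p.2 : ℂ) • x‖ < 1 / k}) := by
    ext p
    obtain ⟨T, lam⟩ := p
    simp only [Set.mem_setOf_eq, Set.mem_iInter, Set.mem_iUnion,
      ContinuousLinearMap.sub_apply, ContinuousLinearMap.smul_apply,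
      ContinuousLinearMap.one_apply]
    constructor
    · intro h k hk
      push_neg at h
      have hk' : (0:ℝ) < 1 / (2 * k) := by positivity
      obtain ⟨x, hx1, hxlt⟩ := h (1 / (2 * k)) hk'
      set S := T - (lam : ℂ) • (1 : X →L[ℂ] X) with hS
      have hε : (0:ℝ) < (1 / (2 * k)) / (‖S‖ + 1) := by positivity
      obtain ⟨y, hyY, hyd⟩ := Metric.mem_closure_iff.mp (hYd x hx1) _ hε
      refine ⟨y, hyY, ?_⟩
      have hSy : T y - (lam : ℂ) • y = S y := by simp [hS]
      have hSx : T x - (lam : ℂ) • x = S x := by simp [hS]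
      rw [hSy]
      have h1 : ‖S y‖ ≤ ‖S x‖ + ‖S‖ * ‖x - y‖ := by
        calc ‖S y‖ = ‖S x + S (y - x)‖ := by rw [← map_add, show x + (y - x) = y from by abel]
          _ ≤ ‖S x‖ + ‖S (y - x)‖ := norm_add_le _ _
          _ ≤ ‖S x‖ + ‖S‖ * ‖y - x‖ := by
              gcongr; exact S.le_opNorm _
          _ = ‖S x‖ + ‖S‖ * ‖x - y‖ := by rw [norm_sub_rev y x]
      have h2 : ‖S‖ * ‖x - y‖ ≤ 1 / (2 * k) := by
        have : ‖x - y‖ ≤ (1 / (2 * k)) / (‖S‖ + 1) := by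
          rw [dist_eq_norm] at hyd; exact hyd.le
        calc ‖S‖ * ‖x - y‖ ≤ (‖S‖ + 1) * ((1 / (2 * k)) / (‖S‖ + 1)) := by
              apply mul_le_mul (by linarith [norm_nonneg S]) this (norm_nonneg _)
                (by positivity)
          _ = 1 / (2 * k) := by field_simp
      have hxlt' : ‖S x‖ < 1 / (2 * k) := by rwa [hSx] at hxlt
      have hk1 : (1:ℝ) ≤ (k:ℝ) := by exact_mod_cast hk
      have : ‖S y‖ < 1 / (2 * k) + 1 / (2 * k) := by linarith
      have hk0 : (k:ℝ) ≠ 0 := by linarith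
      calc ‖S y‖ < 1 / (2 * k) + 1 / (2 * k) := this
        _ = 1 / k := by field_simp; norm_num
    · rintro h ⟨c, hc, hbd⟩
      obtain ⟨n, hn⟩ := exists_nat_one_div_lt hc
      obtain ⟨y, hyY, hylt⟩ := h (n + 1) (Nat.le_add_left 1 n)
      have := hbd y (hYs hyY)
      have hcast : (1:ℝ) / ((n:ℝ) + 1) = 1 / ((n + 1 : ℕ) : ℝ) := by push_cast; ring
      rw [hcast] at hn
      linarith
  refine ⟨key, ⟨fun n => ⋃ x ∈ Y,
      {p : (X →L[ℂ] X) × (closedBall (0 : ℂ) 1) |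
        ‖p.1 x - (p.2 : ℂ) • x‖ < 1 / (n + 1)}, ?_, ?_⟩⟩
  · intro n
    letI : TopologicalSpace (X →L[ℂ] X) := SOT ℂ X
    letI : TopologicalSpace ((X →L[ℂ] X) × (closedBall (0:ℂ) 1)) := SOTprodD X
    refine isOpen_biUnion fun x _ => ?_
    exact isOpen_lt (cont_aux x) continuous_const
  · rw [key]
    ext p
    simp only [Set.mem_iInter, Set.mem_setOf_eq]
    constructor
    · intro h n
      have := h (n + 1) (Nat.le_add_left 1 n)
      convert this using 4
      push_cast
      ring
    · intro h k hk
      obtain ⟨n, rfl⟩ := Nat.exists_eq_add_of_le hk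
      have := h n
      convert this using 4
      push_cast
      ring
end
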